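/- For natural numbers k ≥ 0 and d ≥ 1, the order of the sandpile group of the (2k+1)-cone of the hypercube Q_d equals ∏_{i=0}^{d} (2i + 2k + 1)^{binom(d,i)}. -/

import Mathlib

open Matrix

/-- The Laplacian matrix of the hypercube `Q_d`, with vertex set `{0,1}^d` and
edges between vectors differing in exactly one coordinate. -/
def cubeLap (d : ℕ) : Matrix (Fin d → ZMod 2) (Fin d → ZMod 2) ℤ := fun a b =>
  if a = b then (d : ℤ)
  else if (Finset.univ.filter fun i => a i ≠ b i).card = 1 then -1 else 0

lemma card_coker {ι : Type*} [Fintype ι] [DecidableEq ι] (A : Matrix ι ι ℤ)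
    (hA : A.det ≠ 0) :
    Nat.card ((ι → ℤ) ⧸ LinearMap.range (Matrix.toLin' A)) = A.det.natAbs := by
  classical
  have hinj : Function.Injective (Matrix.toLin' A) := by
    intro x y hxy
    simp only [Matrix.toLin'_apply] at hxy
    have h2 := congrArg (fun v => A.adjugate.mulVec v) hxy
    simp only [Matrix.mulVec_mulVec, Matrix.adjugate_mul, Matrix.smul_mulVec,
      Matrix.one_mulVec] at h2
    exact smul_right_injective _ hA h2
  set N : Submodule ℤ (ι → ℤ) := LinearMap.range (Matrix.toLin' A) with hN
  obtain ⟨n, snf⟩ := N.smithNormalForm (Pi.basisFun ℤ ι)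
  let e0 : (ι → ℤ) ≃ₗ[ℤ] N := LinearEquiv.ofInjective (Matrix.toLin' A) hinj
  have hn : n = Fintype.card ι := by
    have := Module.Basis.indexEquiv snf.bN ((Pi.basisFun ℤ ι).map e0)
    simpa using Fintype.card_congr this
  subst hn
  have hcard : Nat.card ((ι → ℤ) ⧸ N) = ∏ i, (snf.a i).natAbs := by
    have h := snf.toAddSubgroup_index_eq_pow_mul_prod
    have h0 : Nat.card ((ι → ℤ) ⧸ N) = N.toAddSubgroup.index := rfl
    rw [h0, h, Nat.sub_self, pow_zero, one_mul]
    refine Finset.prod_congr rfl fun i _ => ?_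
    rw [Ideal.span_singleton_toAddSubgroup_eq_zmultiples, Int.index_zmultiples]
  have hfbij : Function.Bijective snf.f :=
    (Fintype.bijective_iff_injective_and_card snf.f).2 ⟨snf.f.injective, Fintype.card_fin _⟩
  let e' : Fin (Fintype.card ι) ≃ ι := Equiv.ofBijective snf.f hfbij
  let bN' : Module.Basis ι ℤ N := snf.bN.reindex e'
  have hbN' : ∀ i, (bN' i : ι → ℤ) = snf.a (e'.symm i) • snf.bM i := by
    intro i
    have h : snf.f (e'.symm i) = i := e'.apply_symm_apply i
    rw [Module.Basis.reindex_apply, snf.snf, h]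
  let f2 : (ι → ℤ) →ₗ[ℤ] (ι → ℤ) :=
    (N.subtype) ∘ₗ (snf.bM.equiv bN' (Equiv.refl ι) : (ι → ℤ) →ₗ[ℤ] N)
  have hassoc : Associated A.det (LinearMap.det f2) := by
    have h1 : Matrix.toLin' A = (N.subtype) ∘ₗ (e0 : (ι → ℤ) →ₗ[ℤ] N) :=
      LinearMap.ext fun x => rfl
    rw [← LinearMap.det_toLin' A, h1]
    exact LinearMap.associated_det_comp_equiv _ _ _
  have hdf2 : LinearMap.det f2 = ∏ i : ι, snf.a (e'.symm i) := by
    rw [← LinearMap.det_toMatrix snf.bM]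
    have hmat : LinearMap.toMatrix snf.bM snf.bM f2
        = Matrix.diagonal (fun i => snf.a (e'.symm i)) := by
      ext i j
      rw [LinearMap.toMatrix_apply]
      have hv : f2 (snf.bM j) = snf.a (e'.symm j) • snf.bM j := by
        simp only [f2, LinearMap.comp_apply, LinearEquiv.coe_coe, Module.Basis.equiv_apply,
          Equiv.refl_apply, Submodule.coe_subtype]
        exact hbN' j
      rw [hv, _root_.map_smul, Module.Basis.repr_self, Finsupp.smul_single, smul_eq_mul, mul_one]
      by_cases h : i = j
      · subst h; simp
      · rw [Matrix.diagonal_apply_ne _ h, Finsupp.single_eq_of_ne h]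
    rw [hmat, Matrix.det_diagonal]
  have hnat : A.det.natAbs = (LinearMap.det f2).natAbs := Int.natAbs_eq_iff_associated.mpr hassoc
  have h3 : A.det.natAbs = ∏ i, (snf.a i).natAbs := by
    rw [hnat, hdf2]
    rw [show (∏ i : ι, snf.a (e'.symm i)).natAbs = ∏ i : ι, (snf.a (e'.symm i)).natAbs from
      map_prod Int.natAbsHom _ _]
    exact Equiv.prod_comp e'.symm (fun i => (snf.a i).natAbs)
  exact hcard.trans h3.symm

def chi : ZMod 2 → ℤ := fun x => if x = 0 then 1 else -1

lemma chi_add : ∀ x y : ZMod 2, chi (x + y) = chi x * chi y := by decide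

lemma chi_eq : ∀ x : ZMod 2, chi x = 1 - 2 * (if x = 1 then 1 else 0) := by decide

def Had (d : ℕ) : Matrix (Fin d → ZMod 2) (Fin d → ZMod 2) ℤ := fun a b => ∏ i, chi (a i * b i)

lemma zsum : ∀ c : ZMod 2, (∑ t : ZMod 2, chi (c * t)) = if c = 0 then 2 else 0 := by decide

lemma z2_add_eq_zero : ∀ u v : ZMod 2, u + v = 0 ↔ u = v := by decide

lemma Had_mul_Had (d : ℕ) : Had d * Had d = ((2 : ℤ)^d) • 1 := by
  ext a b
  rw [Matrix.mul_apply]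
  have h1 : ∀ x : Fin d → ZMod 2, Had d a x * Had d x b = ∏ i, chi ((a i + b i) * x i) := by
    intro x
    rw [Had, Had, ← Finset.prod_mul_distrib]
    refine Finset.prod_congr rfl fun i _ => ?_
    rw [← chi_add]
    ring_nf
  simp_rw [h1]
  rw [← Fintype.piFinset_univ, ← Finset.prod_univ_sum (fun _ => Finset.univ)
    (fun i t => chi ((a i + b i) * t))]
  simp_rw [zsum]
  rw [Matrix.smul_apply, Matrix.one_apply]
  by_cases h : a = b
  · subst h
    simp [z2_add_eq_zero]
  · obtain ⟨i, hi⟩ := Function.ne_iff.mp h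
    rw [if_neg h, Finset.prod_eq_zero (Finset.mem_univ i), smul_zero]
    rw [if_neg fun hc => hi ((z2_add_eq_zero _ _).mp hc)]

lemma Had_det_ne_zero (d : ℕ) : (Had d).det ≠ 0 := by
  intro h
  have := congrArg Matrix.det (Had_mul_Had d)
  rw [Matrix.det_mul, h, mul_zero, Matrix.det_smul, Matrix.det_one, mul_one] at this
  have h2 : ((2:ℤ)^d) ^ Fintype.card (Fin d → ZMod 2) ≠ 0 := by positivity
  exact h2 this.symm

/-- weight of a vector -/
def wt {d : ℕ} (a : Fin d → ZMod 2) : ℕ := (Finset.univ.filter fun i => a i = 1).card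

lemma single_ne (d : ℕ) (b : Fin d → ZMod 2) (i : Fin d) : b ≠ b + Pi.single i 1 := by
  intro h
  have := congrFun h i
  simp only [Pi.add_apply, Pi.single_eq_same] at this
  revert this
  generalize b i = u
  revert u
  decide

lemma z2_ne_iff : ∀ u v : ZMod 2, u ≠ v ↔ u = v + 1 := by decide

lemma cubeLap_add_apply (d : ℕ) (c : ℤ) (x b : Fin d → ZMod 2) :
    (cubeLap d + c • 1) x b = (if x = b then ((d : ℤ) + c) else 0)
      - ∑ i, (if x = b + Pi.single i 1 then 1 else 0) := by
  rw [Matrix.add_apply, Matrix.smul_apply, Matrix.one_apply]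
  by_cases h : x = b
  · subst h
    rw [cubeLap, if_pos rfl, if_pos rfl, if_pos rfl, smul_eq_mul, mul_one]
    have hz : ∀ i : Fin d, (if x = x + Pi.single i 1 then (1:ℤ) else 0) = 0 := fun i =>
      if_neg (single_ne d x i)
    simp_rw [hz]
    simp
  · rw [cubeLap, if_neg h, if_neg h, smul_zero, add_zero, if_neg h]
    by_cases hex : ∃ i, x = b + Pi.single i 1
    · obtain ⟨i, hi⟩ := hex
      have hcard : (Finset.univ.filter fun j => x j ≠ b j) = {i} := by
        ext j
        simp only [Finset.mem_filter, Finset.mem_univ, true_and, Finset.mem_singleton]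
        subst hi
        by_cases hj : j = i
        · subst hj
          simp only [Pi.add_apply, Pi.single_eq_same, iff_true]
          generalize b j = u
          revert u
          decide
        · simp [Pi.add_apply, Pi.single_eq_of_ne hj, hj]
      rw [if_pos (by rw [hcard]; rfl)]
      have hsum : ∀ j : Fin d, (if x = b + Pi.single j 1 then (1:ℤ) else 0)
          = if j = i then 1 else 0 := by
        intro j
        by_cases hj : j = i
        · subst hj; rw [if_pos hi, if_pos rfl]
        · rw [if_neg, if_neg hj]
          intro hc
          rw [hi] at hc
          have := congrFun (add_left_cancel hc) i
          rw [Pi.single_eq_same, Pi.single_eq_of_ne (Ne.symm hj)] at this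
          exact one_ne_zero this
      simp_rw [hsum]
      simp
    · push_neg at hex
      have hsum : ∀ j : Fin d, (if x = b + Pi.single j 1 then (1:ℤ) else 0) = 0 := fun j =>
        if_neg (hex j)
      simp_rw [hsum]
      rw [if_neg, Finset.sum_const_zero, sub_zero]
      intro hcard
      obtain ⟨i, hi⟩ := Finset.card_eq_one.mp hcard
      refine hex i (funext fun j => ?_)
      by_cases hj : j = i
      · subst hj
        have hmem : j ∈ Finset.univ.filter fun l => x l ≠ b l := by rw [hi]; exact Finset.mem_singleton_self j
        have := (Finset.mem_filter.mp hmem).2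
        rw [Pi.add_apply, Pi.single_eq_same]
        exact (z2_ne_iff _ _).mp this
      · have hnmem : j ∉ Finset.univ.filter fun l => x l ≠ b l := by
          rw [hi]; simpa using hj
        have : ¬ x j ≠ b j := by simpa using hnmem
        rw [Pi.add_apply, Pi.single_eq_of_ne hj, add_zero]
        exact not_not.mp this

lemma Had_add_single (d : ℕ) (a b : Fin d → ZMod 2) (i : Fin d) :
    Had d a (b + Pi.single i 1) = chi (a i) * Had d a b := by
  rw [Had, Had]
  have h1 : ∀ j, chi (a j * (b + Pi.single i 1 : Fin d → ZMod 2) j) = chi (a j * (Pi.single i 1 : Fin d → ZMod 2) j) * chi (a j * b j) := by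
    intro j
    rw [Pi.add_apply, mul_add, chi_add, mul_comm (chi _)]
  simp_rw [h1]
  rw [Finset.prod_mul_distrib]
  congr 1
  rw [Finset.prod_eq_single i (fun j _ hj => by rw [Pi.single_eq_of_ne hj, mul_zero]; rfl)
    (fun h => absurd (Finset.mem_univ i) h)]
  rw [Pi.single_eq_same, mul_one]

lemma sum_chi (d : ℕ) (a : Fin d → ZMod 2) : ∑ i, chi (a i) = (d : ℤ) - 2 * (wt a : ℤ) := by
  simp_rw [chi_eq]
  rw [Finset.sum_sub_distrib, ← Finset.mul_sum, Finset.sum_boole, Finset.sum_const]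
  simp [wt]

lemma key (d : ℕ) (c : ℤ) :
    Had d * (cubeLap d + c • 1)
      = Matrix.diagonal (fun a => c + 2 * (wt a : ℤ)) * Had d := by
  ext a b
  rw [Matrix.mul_apply, Matrix.diagonal_mul]
  simp_rw [cubeLap_add_apply, mul_sub, Finset.mul_sum, mul_ite, mul_zero]
  rw [Finset.sum_sub_distrib, Finset.sum_ite_eq' Finset.univ b (fun x => Had d a x * ((d:ℤ)+c)),
    if_pos (Finset.mem_univ b)]
  rw [Finset.sum_comm]
  have h2 : ∀ i : Fin d, (∑ x, if x = b + Pi.single i 1 then Had d a x * 1 else 0)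
      = chi (a i) * Had d a b := by
    intro i
    rw [Finset.sum_ite_eq' Finset.univ (b + Pi.single i 1) (fun x => Had d a x * 1),
      if_pos (Finset.mem_univ _), mul_one, Had_add_single]
  simp_rw [h2]
  rw [← Finset.sum_mul, sum_chi]
  ring

lemma det_M (d : ℕ) (c : ℤ) :
    (cubeLap d + c • 1).det = ∏ a : Fin d → ZMod 2, (c + 2 * (wt a : ℤ)) := by
  have h := congrArg Matrix.det (key d c)
  rw [Matrix.det_mul, Matrix.det_mul, Matrix.det_diagonal] at h
  exact mul_left_cancel₀ (Had_det_ne_zero d) (h.trans (mul_comm _ _))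

lemma wt_le {d : ℕ} (a : Fin d → ZMod 2) : wt a ≤ d := by
  refine le_trans (Finset.card_filter_le _ _) ?_
  simp

lemma z2_eq_zero_of_ne_one : ∀ u : ZMod 2, u ≠ 1 → u = 0 := by decide

lemma fiber_card (d i : ℕ) :
    (Finset.univ.filter fun a : Fin d → ZMod 2 => wt a = i).card = d.choose i := by
  have h : d.choose i = (Finset.powersetCard i (Finset.univ : Finset (Fin d))).card := by
    rw [Finset.card_powersetCard, Finset.card_univ, Fintype.card_fin]
  rw [h]
  refine Finset.card_bij (fun a _ => Finset.univ.filter fun j => a j = 1) ?_ ?_ ?_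
  · intro a ha
    rw [Finset.mem_powersetCard]
    exact ⟨Finset.subset_univ _, (Finset.mem_filter.mp ha).2⟩
  · intro a ha b hb hab
    funext j
    by_cases hj : a j = 1
    · have : j ∈ Finset.univ.filter fun l => b l = 1 := by
        rw [← hab]; simp [hj]
      rw [hj, (Finset.mem_filter.mp this).2]
    · have : j ∉ Finset.univ.filter fun l => b l = 1 := by
        rw [← hab]; simp [hj]
      have hb' : ¬ b j = 1 := by simpa using this
      rw [z2_eq_zero_of_ne_one _ hj, z2_eq_zero_of_ne_one _ hb']
  · intro s hs
    refine ⟨fun j => if j ∈ s then 1 else 0, ?_, ?_⟩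
    · have hfil : (Finset.univ.filter fun j => (if j ∈ s then (1 : ZMod 2) else 0) = 1) = s := by
        ext j
        by_cases hj : j ∈ s <;> simp [hj]
      rw [Finset.mem_filter]
      refine ⟨Finset.mem_univ _, ?_⟩
      rw [wt, hfil]
      exact (Finset.mem_powersetCard.mp hs).2
    · ext j
      by_cases hj : j ∈ s <;> simp [hj]

lemma prod_group (d : ℕ) (c : ℤ) :
    ∏ a : Fin d → ZMod 2, (c + 2 * (wt a : ℤ))
      = ∏ i ∈ Finset.range (d + 1), (c + 2 * (i : ℤ)) ^ (d.choose i) := by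
  rw [← Finset.prod_fiberwise_of_maps_to
    (fun a _ => Finset.mem_range.mpr (Nat.lt_succ_of_le (wt_le a)))
    (fun a => c + 2 * (wt a : ℤ))]
  refine Finset.prod_congr rfl fun i hi => ?_
  rw [Finset.prod_congr rfl (fun a ha => show c + 2 * (wt a : ℤ) = c + 2 * (i : ℤ) by
    rw [(Finset.mem_filter.mp ha).2]), Finset.prod_const, fiber_card]

/-- The order of the sandpile group of the `(2k+1)`-cone of the hypercube `Q_d`
(the cokernel of the transpose of the reduced Laplacian `L(Q_d) + (2k+1)·I`)
equals `∏_{i=0}^{d} (2i + 2k + 1)^{binom(d,i)}`. -/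
theorem stmt3 (k d : ℕ) (hd : 1 ≤ d) :
    Nat.card
        (((Fin d → ZMod 2) → ℤ) ⧸
          LinearMap.range (Matrix.toLin' (cubeLap d + ((2 * k + 1 : ℤ)) • 1)ᵀ)) =
      ∏ i ∈ Finset.range (d + 1), (2 * i + 2 * k + 1) ^ d.choose i := by
  have hdet : (cubeLap d + ((2 * k + 1 : ℤ)) • 1)ᵀ.det
      = ((∏ i ∈ Finset.range (d + 1), (2 * i + 2 * k + 1) ^ d.choose i : ℕ) : ℤ) := by
    rw [Matrix.det_transpose, det_M, prod_group]
    push_cast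
    refine Finset.prod_congr rfl fun i _ => ?_
    ring
  have hpos : (0 : ℕ) < ∏ i ∈ Finset.range (d + 1), (2 * i + 2 * k + 1) ^ d.choose i :=
    Finset.prod_pos fun i _ => pow_pos (by omega) _
  rw [card_coker _ (by rw [hdet]; exact_mod_cast hpos.ne'), hdet, Int.natAbs_natCast]
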